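/- For every λ > 0, the radial kernel K_λ(A,B) = exp(−λ · d_peak(A,B)) is positive semidefinite on ℝⁿ: for any finite collection A₁,…,A_m ∈ ℝⁿ and any real coefficients c₁,…,c_m, Σᵢ Σⱼ cᵢ cⱼ exp(−λ d_peak(Aᵢ, Aⱼ)) ≥ 0. -/

import Mathlib

open Finset

/-- Sign-aware intersection `N(A,B) = Σ_{i : AᵢBᵢ > 0} min |Aᵢ| |Bᵢ|`. -/
noncomputable def Npeak {n : ℕ} (A B : Fin n → ℝ) : ℝ :=
  ∑ i ∈ Finset.univ.filter (fun i => 0 < A i * B i), min |A i| |B i|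

/-- Peak-to-peak union `U_peak(A,B) = Σᵢ (max Aᵢ⁺ Bᵢ⁺ + max Aᵢ⁻ Bᵢ⁻)`. -/
noncomputable def Upeak {n : ℕ} (A B : Fin n → ℝ) : ℝ :=
  ∑ i, (max (max (A i) 0) (max (B i) 0) + max (max (-(A i)) 0) (max (-(B i)) 0))

/-- Peak-to-peak similarity `J_peak = N/U_peak` (and `1` when `U_peak = 0`). -/
noncomputable def Jpeak {n : ℕ} (A B : Fin n → ℝ) : ℝ :=
  if 0 < Upeak A B then Npeak A B / Upeak A B else 1

/-- Peak-to-peak distance `d_peak = 1 − J_peak`. -/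
noncomputable def dpeak {n : ℕ} (A B : Fin n → ℝ) : ℝ := 1 - Jpeak A B

/-! ### Auxiliary kernel machinery -/

open MeasureTheory


open Finset

/-- Kernel positive semidefiniteness on a finite index type. -/
def KPsd {m : ℕ} (K : Fin m → Fin m → ℝ) : Prop :=
  ∀ c : Fin m → ℝ, 0 ≤ ∑ i, ∑ j, c i * c j * K i j

lemma kpsd_sum_rank_one {m : ℕ} {ι : Type*} (t : Finset ι) (g : ι → Fin m → ℝ) :
    KPsd (fun i j => ∑ p ∈ t, g p i * g p j) := by
  intro c
  have : ∑ i, ∑ j, c i * c j * (∑ p ∈ t, g p i * g p j)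
      = ∑ p ∈ t, (∑ i, c i * g p i) ^ 2 := by
    simp_rw [Finset.mul_sum, Finset.sum_comm (s := Finset.univ (α := Fin m)) (t := t)]
    refine Finset.sum_congr rfl fun p _ => ?_
    rw [sq, Finset.sum_mul_sum]
    exact Finset.sum_congr rfl fun i _ => Finset.sum_congr rfl fun j _ => by ring
  rw [this]
  exact Finset.sum_nonneg fun p _ => sq_nonneg _

lemma kpsd_rank_one {m : ℕ} (f : Fin m → ℝ) : KPsd (fun i j => f i * f j) := by
  simpa using kpsd_sum_rank_one (t := ({0} : Finset ℕ)) (g := fun _ => f)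

lemma KPsd.add {m : ℕ} {K L : Fin m → Fin m → ℝ} (hK : KPsd K) (hL : KPsd L) :
    KPsd (fun i j => K i j + L i j) := by
  intro c
  have := add_nonneg (hK c) (hL c)
  simpa [mul_add, Finset.sum_add_distrib] using this

lemma KPsd.sum {m : ℕ} {ι : Type*} (t : Finset ι) {K : ι → Fin m → Fin m → ℝ}
    (hK : ∀ p ∈ t, KPsd (K p)) : KPsd (fun i j => ∑ p ∈ t, K p i j) := by
  intro c
  have : ∑ i, ∑ j, c i * c j * (∑ p ∈ t, K p i j)
      = ∑ p ∈ t, ∑ i, ∑ j, c i * c j * K p i j := by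
    simp_rw [Finset.mul_sum]
    calc ∑ i : Fin m, ∑ j : Fin m, ∑ p ∈ t, c i * c j * K p i j
        = ∑ i : Fin m, ∑ p ∈ t, ∑ j : Fin m, c i * c j * K p i j :=
          Finset.sum_congr rfl fun i _ => Finset.sum_comm
      _ = ∑ p ∈ t, ∑ i : Fin m, ∑ j : Fin m, c i * c j * K p i j := Finset.sum_comm
  rw [this]
  exact Finset.sum_nonneg fun p hp => hK p hp c


open scoped MatrixOrder in
lemma kpsd_exists_decomp {m : ℕ} {K : Fin m → Fin m → ℝ}
    (hsym : ∀ i j, K i j = K j i) (hK : KPsd K) :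
    ∃ B : Fin m → Fin m → ℝ, ∀ i j, K i j = ∑ r, B r i * B r j := by
  set M : Matrix (Fin m) (Fin m) ℝ := Matrix.of (fun i j => K i j) with hM
  have hpsd : M.PosSemidef := by
    refine Matrix.posSemidef_iff_dotProduct_mulVec.mpr ⟨?_, ?_⟩
    · ext i j
      simp [hM, Matrix.conjTranspose_apply, hsym i j]
    · intro x
      have := hK x
      have heq : dotProduct (star x) (M.mulVec x) = ∑ i, ∑ j, x i * x j * K i j := by
        simp only [dotProduct, Matrix.mulVec, Pi.star_apply, star_trivial,
          Finset.mul_sum, hM, Matrix.of_apply]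
        exact Finset.sum_congr rfl fun i _ => Finset.sum_congr rfl fun j _ => by ring
      rw [heq]; exact this
  obtain ⟨B, hB⟩ := CStarAlgebra.nonneg_iff_eq_star_mul_self.mp hpsd.nonneg
  refine ⟨fun r i => B r i, fun i j => ?_⟩
  have : M i j = (B.conjTranspose * B) i j := by rw [hB, Matrix.star_eq_conjTranspose]
  simpa [hM, Matrix.mul_apply, Matrix.conjTranspose_apply] using this

lemma KPsd.mul {m : ℕ} {K L : Fin m → Fin m → ℝ}
    (hsK : ∀ i j, K i j = K j i) (hsL : ∀ i j, L i j = L j i)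
    (hK : KPsd K) (hL : KPsd L) : KPsd (fun i j => K i j * L i j) := by
  obtain ⟨B, hB⟩ := kpsd_exists_decomp hsK hK
  obtain ⟨C, hC⟩ := kpsd_exists_decomp hsL hL
  have hprod : ∀ i j, K i j * L i j
      = ∑ p ∈ (Finset.univ ×ˢ Finset.univ : Finset (Fin m × Fin m)),
          (B p.1 i * C p.2 i) * (B p.1 j * C p.2 j) := by
    intro i j
    rw [hB, hC, Finset.sum_mul_sum, ← Finset.sum_product']
    exact Finset.sum_congr rfl fun r _ => by ring
  have := kpsd_sum_rank_one (t := (Finset.univ ×ˢ Finset.univ : Finset (Fin m × Fin m)))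
    (g := fun p i => B p.1 i * C p.2 i)
  intro c
  have h2 := this c
  simpa only [← hprod] using h2

lemma kpsd_ones {m : ℕ} : KPsd (fun (_ _ : Fin m) => (1:ℝ)) := by
  simpa using kpsd_rank_one (fun _ : Fin m => (1:ℝ))

lemma KPsd.pow {m : ℕ} {K : Fin m → Fin m → ℝ}
    (hsym : ∀ i j, K i j = K j i) (hK : KPsd K) (k : ℕ) :
    KPsd (fun i j => K i j ^ k) := by
  induction k with
  | zero => simpa using kpsd_ones (m := m)
  | succ k ih =>
      have := KPsd.mul (K := fun i j => K i j ^ k) (L := K)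
        (fun i j => by show K i j ^ k = K j i ^ k; rw [hsym]) hsym ih hK
      simpa [pow_succ] using this

lemma min_kernel_psd_on {m : ℕ} (s : Finset (Fin m)) :
    ∀ (a c : Fin m → ℝ), (∀ i ∈ s, 0 ≤ a i) →
      0 ≤ ∑ i ∈ s, ∑ j ∈ s, c i * c j * min (a i) (a j) := by
  induction s using Finset.strongInduction with
  | _ s ih =>
    intro a c ha
    rcases s.eq_empty_or_nonempty with rfl | hs
    · simp
    obtain ⟨i0, hi0, hmin⟩ := s.exists_min_image a hs
    have hsplit : ∀ i j : Fin m, min (a i) (a j)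
        = a i0 + min (a i - a i0) (a j - a i0) := by
      intro i j; rw [min_sub_sub_right]; ring
    have h1 : ∑ i ∈ s, ∑ j ∈ s, c i * c j * min (a i) (a j)
        = a i0 * (∑ i ∈ s, c i) ^ 2
          + ∑ i ∈ s, ∑ j ∈ s, c i * c j * min (a i - a i0) (a j - a i0) := by
      simp_rw [hsplit]
      rw [sq, Finset.sum_mul_sum, Finset.mul_sum, ← Finset.sum_add_distrib]
      refine Finset.sum_congr rfl fun i hi => ?_
      rw [Finset.mul_sum, ← Finset.sum_add_distrib]
      exact Finset.sum_congr rfl fun j hj => by ring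
    rw [h1]
    have ha' : ∀ i ∈ s, 0 ≤ a i - a i0 := fun i hi => sub_nonneg.mpr (hmin i hi)
    -- remove row/column i0 (whose entries vanish)
    have hz : ∀ j ∈ s, min (a i0 - a i0) (a j - a i0) = 0 := by
      intro j hj
      rw [sub_self, min_eq_left (ha' j hj)]
    have h2 : ∑ i ∈ s, ∑ j ∈ s, c i * c j * min (a i - a i0) (a j - a i0)
        = ∑ i ∈ s.erase i0, ∑ j ∈ s.erase i0, c i * c j * min (a i - a i0) (a j - a i0) := by
      rw [← Finset.add_sum_erase _ _ hi0]
      have hrow : ∑ j ∈ s, c i0 * c j * min (a i0 - a i0) (a j - a i0) = 0 := by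
        refine Finset.sum_eq_zero fun j hj => by rw [hz j hj, mul_zero]
      rw [hrow, zero_add]
      refine Finset.sum_congr rfl fun i hi => ?_
      rw [← Finset.add_sum_erase _ _ hi0]
      have : min (a i - a i0) (a i0 - a i0) = 0 := by
        rw [min_comm]; exact hz i (Finset.mem_of_mem_erase hi)
      rw [this, mul_zero, zero_add]
    rw [h2]
    have := ih (s.erase i0) (Finset.erase_ssubset hi0) (fun i => a i - a i0) c
      (fun i hi => ha' i (Finset.mem_of_mem_erase hi))
    exact add_nonneg (mul_nonneg (ha i0 hi0) (sq_nonneg _)) this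

lemma integral_exp_neg_mul_Ioi' {b : ℝ} (hb : 0 < b) :
    ∫ x in Set.Ioi (0:ℝ), Real.exp (-(b * x)) = 1 / b := by
  have h := MeasureTheory.integral_comp_mul_left_Ioi (fun x => Real.exp (-x)) 0 hb
  simp only [mul_zero] at h
  rw [h, integral_exp_neg_Ioi, neg_zero, Real.exp_zero, smul_eq_mul, mul_one, one_div]

lemma inv_sum_kernel_psd {m : ℕ} (a : Fin m → ℝ) (ha : ∀ i, 0 < a i) (c : Fin m → ℝ) :
    0 ≤ ∑ i, ∑ j, c i * c j * (1 / (a i + a j)) := by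
  have hI : ∀ i j : Fin m,
      IntegrableOn (fun t => c i * c j * Real.exp (-((a i + a j) * t))) (Set.Ioi (0:ℝ)) := by
    intro i j
    have h := (exp_neg_integrableOn_Ioi 0 (add_pos (ha i) (ha j))).const_mul (c i * c j)
    simpa only [neg_mul, IntegrableOn] using h
  have key : ∑ i, ∑ j, c i * c j * (1 / (a i + a j))
      = ∫ t in Set.Ioi (0:ℝ), (∑ i, c i * Real.exp (-(a i * t))) ^ 2 := by
    have hexpand : ∀ t : ℝ, (∑ i, c i * Real.exp (-(a i * t))) ^ 2
        = ∑ i, ∑ j, c i * c j * Real.exp (-((a i + a j) * t)) := by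
      intro t
      rw [sq, Finset.sum_mul_sum]
      refine Finset.sum_congr rfl fun i _ => Finset.sum_congr rfl fun j _ => ?_
      have he : Real.exp (-((a i + a j) * t))
          = Real.exp (-(a i * t)) * Real.exp (-(a j * t)) := by
        rw [← Real.exp_add]; congr 1; ring
      rw [he]; ring
    simp_rw [hexpand]
    rw [MeasureTheory.integral_finset_sum _ (fun i _ => integrable_finset_sum _ (fun j _ => hI i j))]
    refine Finset.sum_congr rfl fun i _ => ?_
    rw [MeasureTheory.integral_finset_sum _ (fun j _ => hI i j)]
    refine Finset.sum_congr rfl fun j _ => ?_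
    rw [MeasureTheory.integral_const_mul, integral_exp_neg_mul_Ioi' (add_pos (ha i) (ha j))]
  rw [key]
  exact MeasureTheory.setIntegral_nonneg measurableSet_Ioi fun t _ => sq_nonneg _

lemma coord_min (a b : ℝ) : min (max a 0) (max b 0) + min (max (-a) 0) (max (-b) 0)
    = if 0 < a * b then min |a| |b| else 0 := by
  rcases lt_trichotomy a 0 with ha | rfl | ha <;> rcases lt_trichotomy b 0 with hb | rfl | hb
  · simp [max_eq_right ha.le, max_eq_right hb.le, max_eq_left (neg_nonneg.2 ha.le),
      max_eq_left (neg_nonneg.2 hb.le), abs_of_neg ha, abs_of_neg hb,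
      if_pos (mul_pos_of_neg_of_neg ha hb)]
  · simp [max_eq_right ha.le, min_eq_right (neg_nonneg.2 ha.le)]
  · simp [max_eq_right ha.le, max_eq_left hb.le, max_eq_left (neg_nonneg.2 ha.le),
      max_eq_right (neg_nonpos.2 hb.le), min_eq_left hb.le,
      (mul_neg_of_neg_of_pos ha hb).not_gt, min_eq_right (neg_nonneg.2 ha.le)]
  · simp [min_eq_left (le_max_right b 0), min_eq_left (le_max_right (-b) 0)]
  · simp
  · simp [min_eq_left (le_max_right b 0), min_eq_left (le_max_right (-b) 0)]
  · simp [max_eq_left ha.le, max_eq_right hb.le, max_eq_right (neg_nonpos.2 ha.le),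
      max_eq_left (neg_nonneg.2 hb.le), min_eq_right ha.le,
      (mul_neg_of_pos_of_neg ha hb).not_gt, min_eq_left (neg_nonneg.2 hb.le)]
  · simp [max_eq_left ha.le, min_eq_right ha.le, max_eq_right (neg_nonpos.2 ha.le)]
  · simp [max_eq_left ha.le, max_eq_left hb.le, max_eq_right (neg_nonpos.2 ha.le),
      max_eq_right (neg_nonpos.2 hb.le), abs_of_pos ha, abs_of_pos hb,
      if_pos (mul_pos ha hb)]

lemma coord_max (a b : ℝ) : max (max a 0) (max b 0) + max (max (-a) 0) (max (-b) 0)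
    = (max a 0 + max (-a) 0) + (max b 0 + max (-b) 0)
      - (min (max a 0) (max b 0) + min (max (-a) 0) (max (-b) 0)) := by
  have h1 := max_add_min (max a 0) (max b 0)
  have h2 := max_add_min (max (-a) 0) (max (-b) 0)
  linarith

/-- Total mass of the sign-split embedding. -/
noncomputable def Sfun {n : ℕ} (A : Fin n → ℝ) : ℝ := ∑ k, (max (A k) 0 + max (-(A k)) 0)

lemma Sfun_nonneg {n : ℕ} (A : Fin n → ℝ) : 0 ≤ Sfun A :=
  Finset.sum_nonneg fun k _ => add_nonneg (le_max_right _ _) (le_max_right _ _)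

lemma Npeak_eq {n : ℕ} (A B : Fin n → ℝ) :
    Npeak A B = ∑ k, (min (max (A k) 0) (max (B k) 0)
      + min (max (-(A k)) 0) (max (-(B k)) 0)) := by
  rw [Npeak, Finset.sum_filter]
  exact Finset.sum_congr rfl fun k _ => (coord_min (A k) (B k)).symm

lemma Npeak_symm {n : ℕ} (A B : Fin n → ℝ) : Npeak A B = Npeak B A := by
  rw [Npeak_eq, Npeak_eq]
  exact Finset.sum_congr rfl fun k _ => by rw [min_comm, min_comm (max (-(B k)) 0)]

lemma Npeak_nonneg {n : ℕ} (A B : Fin n → ℝ) : 0 ≤ Npeak A B := by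
  rw [Npeak_eq]
  exact Finset.sum_nonneg fun k _ => add_nonneg
    (le_min (le_max_right _ _) (le_max_right _ _))
    (le_min (le_max_right _ _) (le_max_right _ _))

lemma Npeak_le_Sfun_left {n : ℕ} (A B : Fin n → ℝ) : Npeak A B ≤ Sfun A := by
  rw [Npeak_eq, Sfun]
  exact Finset.sum_le_sum fun k _ => add_le_add (min_le_left _ _) (min_le_left _ _)

lemma Upeak_eq {n : ℕ} (A B : Fin n → ℝ) : Upeak A B = Sfun A + Sfun B - Npeak A B := by
  rw [Upeak, Npeak_eq, Sfun, Sfun, ← Finset.sum_add_distrib, ← Finset.sum_sub_distrib]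
  exact Finset.sum_congr rfl fun k _ => coord_max (A k) (B k)

lemma Upeak_symm {n : ℕ} (A B : Fin n → ℝ) : Upeak A B = Upeak B A := by
  rw [Upeak_eq, Upeak_eq, Npeak_symm]; ring

lemma Jpeak_symm {n : ℕ} (A B : Fin n → ℝ) : Jpeak A B = Jpeak B A := by
  rw [Jpeak, Jpeak, Upeak_symm B A, Npeak_symm B A]

/-- Geometric series expansion of `x / (y - x)`. -/
lemma div_sub_eq_tsum {x y : ℝ} (hx : 0 ≤ x) (hxy : x < y) :
    x / (y - x) = ∑' k : ℕ, (x / y) ^ (k + 1) := by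
  have hy : 0 < y := lt_of_le_of_lt hx hxy
  have hr0 : 0 ≤ x / y := div_nonneg hx hy.le
  have hr1 : x / y < 1 := (div_lt_one hy).mpr hxy
  have hsum : ∑' k : ℕ, (x / y) ^ (k + 1) = (x / y) * ∑' k : ℕ, (x / y) ^ k := by
    rw [← tsum_mul_left]
    exact tsum_congr fun k => pow_succ' _ _
  rw [hsum, tsum_geometric_of_lt_one hr0 hr1]
  have hyx : y - x ≠ 0 := ne_of_gt (sub_pos.mpr hxy)
  field_simp

/-- Swapping a double finite sum with a `tsum` to prove nonnegativity. -/
lemma sum_sum_tsum_nonneg {m : ℕ} (f : Fin m → Fin m → ℕ → ℝ)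
    (hsum : ∀ i j, Summable (f i j))
    (hterm : ∀ k, 0 ≤ ∑ i, ∑ j, f i j k) :
    0 ≤ ∑ i : Fin m, ∑ j : Fin m, ∑' k : ℕ, f i j k := by
  have h1 : ∀ i : Fin m, ∑ j, ∑' k : ℕ, f i j k = ∑' k : ℕ, ∑ j, f i j k :=
    fun i => (Summable.tsum_finsetSum (fun j _ => hsum i j)).symm
  have h2 : ∑ i : Fin m, ∑' k : ℕ, ∑ j, f i j k = ∑' k : ℕ, ∑ i, ∑ j, f i j k :=
    (Summable.tsum_finsetSum (fun i _ => summable_sum (fun j _ => hsum i j))).symm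
  calc (0:ℝ) ≤ ∑' k : ℕ, ∑ i, ∑ j, f i j k := tsum_nonneg hterm
    _ = ∑ i : Fin m, ∑' k : ℕ, ∑ j, f i j k := h2.symm
    _ = ∑ i : Fin m, ∑ j, ∑' k : ℕ, f i j k :=
        Finset.sum_congr rfl fun i _ => (h1 i).symm

/-- The peak-to-peak similarity is a positive semidefinite kernel. -/
lemma jpeak_kernel_psd {n m : ℕ} (A : Fin m → Fin n → ℝ) :
    KPsd (fun i j => Jpeak (A i) (A j)) := by
  classical
  set s : Fin m → ℝ := fun i => Sfun (A i) with hs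
  have hs0 : ∀ i, 0 ≤ s i := fun i => Sfun_nonneg (A i)
  set s' : Fin m → ℝ := fun i => if s i = 0 then 1 else s i with hs'
  have hs'pos : ∀ i, 0 < s' i := by
    intro i
    by_cases h : s i = 0
    · simp [hs', h]
    · simp only [hs', if_neg h]
      exact lt_of_le_of_ne (hs0 i) (Ne.symm h)
  set M : Fin m → Fin m → ℝ := fun i j => Npeak (A i) (A j) with hM
  have hM0 : ∀ i j, 0 ≤ M i j := fun i j => Npeak_nonneg _ _
  have hMsymm : ∀ i j, M i j = M j i := fun i j => Npeak_symm _ _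
  have hMle : ∀ i j, M i j ≤ s i := fun i j => Npeak_le_Sfun_left _ _
  have hMlt : ∀ i j, M i j < s' i + s' j := by
    intro i j
    by_cases h : s i = 0
    · have h1 : M i j ≤ 0 := (hMle i j).trans_eq h
      calc M i j ≤ 0 := h1
        _ < s' i + s' j := add_pos (hs'pos i) (hs'pos j)
    · calc M i j ≤ s i := hMle i j
        _ = s' i := by simp [hs', h]
        _ < s' i + s' j := lt_add_of_pos_right _ (hs'pos j)
  -- M is a PSD kernel (sum of min-kernels over coordinates)
  have hKM : KPsd M := by
    have hrepr : ∀ i j, M i j = ∑ k : Fin n,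
        (min (max (A i k) 0) (max (A j k) 0) + min (max (-(A i k)) 0) (max (-(A j k)) 0)) :=
      fun i j => Npeak_eq (A i) (A j)
    have : KPsd (fun i j => ∑ k : Fin n,
        (min (max (A i k) 0) (max (A j k) 0) + min (max (-(A i k)) 0) (max (-(A j k)) 0))) := by
      refine KPsd.sum Finset.univ fun k _ => KPsd.add ?_ ?_
      · intro c
        simpa using min_kernel_psd_on Finset.univ (fun i => max (A i k) 0) c
          (fun i _ => le_max_right _ _)
      · intro c
        simpa using min_kernel_psd_on Finset.univ (fun i => max (-(A i k)) 0) c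
          (fun i _ => le_max_right _ _)
    intro c
    simpa only [← hrepr] using this c
  have hKP : KPsd (fun i j => 1 / (s' i + s' j)) := fun c => inv_sum_kernel_psd s' hs'pos c
  set r : Fin m → Fin m → ℝ := fun i j => M i j * (1 / (s' i + s' j)) with hr
  have hKr : KPsd r := KPsd.mul hMsymm (fun i j => by rw [add_comm]) hKM hKP
  have hrsymm : ∀ i j, r i j = r j i := by
    intro i j; simp only [hr]; rw [hMsymm, add_comm]
  have hrdiv : ∀ i j, r i j = M i j / (s' i + s' j) := by
    intro i j; simp only [hr]; rw [mul_one_div]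
  have hr0 : ∀ i j, 0 ≤ r i j := by
    intro i j; rw [hrdiv]
    exact div_nonneg (hM0 i j) (add_pos (hs'pos i) (hs'pos j)).le
  have hr1 : ∀ i j, r i j < 1 := by
    intro i j; rw [hrdiv]
    exact (div_lt_one (add_pos (hs'pos i) (hs'pos j))).mpr (hMlt i j)
  set Jser : Fin m → Fin m → ℝ := fun i j => ∑' k : ℕ, r i j ^ (k + 1) with hJser
  have hKJser : KPsd Jser := by
    intro c
    have hsummable : ∀ i j, Summable (fun k : ℕ => c i * c j * r i j ^ (k + 1)) := by
      intro i j
      have hg : Summable (fun k : ℕ => r i j ^ k) :=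
        summable_geometric_of_lt_one (hr0 i j) (hr1 i j)
      have : Summable (fun k : ℕ => r i j ^ (k + 1)) := by
        simpa [pow_succ'] using hg.mul_left (r i j)
      exact this.mul_left _
    have hterm : ∀ k : ℕ, 0 ≤ ∑ i, ∑ j, c i * c j * r i j ^ (k + 1) :=
      fun k => KPsd.pow hrsymm hKr (k + 1) c
    have := sum_sum_tsum_nonneg (fun i j k => c i * c j * r i j ^ (k + 1)) hsummable hterm
    calc (0:ℝ) ≤ ∑ i, ∑ j, ∑' k : ℕ, c i * c j * r i j ^ (k + 1) := this
      _ = ∑ i, ∑ j, c i * c j * Jser i j := by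
          refine Finset.sum_congr rfl fun i _ => Finset.sum_congr rfl fun j _ => ?_
          rw [hJser, tsum_mul_left]
  -- indicator of the zero vectors
  set z : Fin m → ℝ := fun i => if s i = 0 then 1 else 0 with hz
  set e : Fin m → ℝ := fun i => if s i = 0 then 0 else 1 with he
  have hJrepr : ∀ i j, Jpeak (A i) (A j) = e i * e j * Jser i j + z i * z j := by
    intro i j
    have hU : Upeak (A i) (A j) = s i + s j - M i j := Upeak_eq (A i) (A j)
    by_cases hi : s i = 0 <;> by_cases hj : s j = 0
    · have hMz : M i j = 0 := le_antisymm ((hMle i j).trans_eq hi) (hM0 i j)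
      have hU0 : Upeak (A i) (A j) = 0 := by rw [hU, hi, hj, hMz]; ring
      rw [Jpeak, hU0]
      simp [he, hz, hi, hj]
    · have hMz : M i j = 0 := le_antisymm ((hMle i j).trans_eq hi) (hM0 i j)
      have hU0 : Upeak (A i) (A j) = s j := by rw [hU, hi, hMz]; ring
      have hjpos : 0 < s j := lt_of_le_of_ne (hs0 j) (Ne.symm hj)
      rw [Jpeak, hU0, if_pos hjpos]
      have : Npeak (A i) (A j) = 0 := hMz
      rw [this]
      simp [he, hz, hi, hj]
    · have hMz : M i j = 0 := by
        have : M i j ≤ s j := (hMsymm i j).trans_le (hMle j i)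
        exact le_antisymm (this.trans_eq hj) (hM0 i j)
      have hU0 : Upeak (A i) (A j) = s i := by rw [hU, hj, hMz]; ring
      have hipos : 0 < s i := lt_of_le_of_ne (hs0 i) (Ne.symm hi)
      rw [Jpeak, hU0, if_pos hipos]
      have : Npeak (A i) (A j) = 0 := hMz
      rw [this]
      simp [he, hz, hi, hj]
    · have hipos : 0 < s i := lt_of_le_of_ne (hs0 i) (Ne.symm hi)
      have hjpos : 0 < s j := lt_of_le_of_ne (hs0 j) (Ne.symm hj)
      have hlt : M i j < s i + s j := by
        calc M i j ≤ s i := hMle i j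
          _ < s i + s j := lt_add_of_pos_right _ hjpos
      have hUpos : 0 < Upeak (A i) (A j) := by rw [hU]; linarith
      rw [Jpeak, if_pos hUpos, hU]
      have hs'i : s' i = s i := by simp [hs', hi]
      have hs'j : s' j = s j := by simp [hs', hj]
      have : Jser i j = M i j / (s i + s j - M i j) := by
        rw [hJser]
        have := div_sub_eq_tsum (hM0 i j) hlt
        rw [this]
        refine (tsum_congr fun k => ?_).symm
        rw [hrdiv, hs'i, hs'j]
      rw [this]
      simp [he, hz, hi, hj]
      rfl
  intro c
  have hsplit : ∑ i, ∑ j, c i * c j * Jpeak (A i) (A j)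
      = (∑ i, ∑ j, (c i * e i) * (c j * e j) * Jser i j)
        + (∑ i, c i * z i) ^ 2 := by
    rw [sq, Finset.sum_mul_sum, ← Finset.sum_add_distrib]
    refine Finset.sum_congr rfl fun i _ => ?_
    rw [← Finset.sum_add_distrib]
    refine Finset.sum_congr rfl fun j _ => ?_
    rw [hJrepr i j]; ring
  rw [hsplit]
  exact add_nonneg (hKJser (fun i => c i * e i)) (sq_nonneg _)

/-- For every `λ > 0`, the radial kernel `K_λ(A,B) = exp(−λ·d_peak(A,B))` is positive
semidefinite on `ℝⁿ`: for any `A₁,…,A_m ∈ ℝⁿ` and real coefficients `c₁,…,c_m`,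
`Σᵢ Σⱼ cᵢ cⱼ exp(−λ d_peak(Aᵢ,Aⱼ)) ≥ 0`. -/
theorem exp_dpeak_kernel_psd {n m : ℕ} (lam : ℝ) (hlam : 0 < lam)
    (A : Fin m → Fin n → ℝ) (c : Fin m → ℝ) :
    0 ≤ ∑ i : Fin m, ∑ j : Fin m,
        c i * c j * Real.exp (-lam * dpeak (A i) (A j)) := by
  set J : Fin m → Fin m → ℝ := fun i j => Jpeak (A i) (A j) with hJ
  have hKJ : KPsd J := jpeak_kernel_psd A
  have hJsymm : ∀ i j, J i j = J j i := fun i j => Jpeak_symm (A i) (A j)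
  have hexp : ∀ i j, Real.exp (-lam * dpeak (A i) (A j))
      = Real.exp (-lam) * ∑' k : ℕ, (lam * J i j) ^ k / (k.factorial : ℝ) := by
    intro i j
    rw [dpeak, show -lam * (1 - Jpeak (A i) (A j)) = -lam + lam * J i j by rw [hJ]; ring,
      Real.exp_add]
    congr 1
    rw [Real.exp_eq_exp_ℝ, NormedSpace.exp_eq_tsum_div]
  have key : 0 ≤ ∑ i : Fin m, ∑ j : Fin m,
      ∑' k : ℕ, c i * c j * ((lam * J i j) ^ k / (k.factorial : ℝ)) := by
    refine sum_sum_tsum_nonneg _ (fun i j => ?_) (fun k => ?_)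
    · exact (Real.summable_pow_div_factorial (lam * J i j)).mul_left _
    · have hterm : ∑ i, ∑ j, c i * c j * ((lam * J i j) ^ k / (k.factorial : ℝ))
          = (lam ^ k / (k.factorial : ℝ)) * ∑ i, ∑ j, c i * c j * J i j ^ k := by
        rw [Finset.mul_sum]
        refine Finset.sum_congr rfl fun i _ => ?_
        rw [Finset.mul_sum]
        refine Finset.sum_congr rfl fun j _ => ?_
        rw [mul_pow]; ring
      rw [hterm]
      exact mul_nonneg (div_nonneg (pow_nonneg hlam.le k) (Nat.cast_nonneg _))
        (KPsd.pow hJsymm hKJ k c)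
  calc (0:ℝ) ≤ Real.exp (-lam) * ∑ i : Fin m, ∑ j : Fin m,
        ∑' k : ℕ, c i * c j * ((lam * J i j) ^ k / (k.factorial : ℝ)) :=
        mul_nonneg (Real.exp_pos _).le key
    _ = ∑ i : Fin m, ∑ j : Fin m,
        c i * c j * Real.exp (-lam * dpeak (A i) (A j)) := by
        rw [Finset.mul_sum]
        refine Finset.sum_congr rfl fun i _ => ?_
        rw [Finset.mul_sum]
        refine Finset.sum_congr rfl fun j _ => ?_
        rw [hexp i j, tsum_mul_left]
        ring
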